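/- Define k(n) = (Σ_{i,j=0}^{n} C(i+j,i)·C(i+j,j)) / C(2n,n)². Then the supremum of the sequence (k(n)) over all natural numbers n equals 16/9, and this supremum is not attained. -/

import Mathlib

open Filter Topology


def Snat (n : ℕ) : ℕ :=
  ∑ i ∈ Finset.range (n + 1), ∑ j ∈ Finset.range (n + 1),
    Nat.choose (i + j) i * Nat.choose (i + j) j

def Unat (n : ℕ) : ℕ :=
  ∑ j ∈ Finset.range (n + 1), ((n + 1 + j).choose j) ^ 2

lemma sym (i j : ℕ) : (i + j).choose j = (i + j).choose i := by
  rw [← Nat.choose_symm (by omega : j ≤ i + j)]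
  congr 1; omega

lemma Sdec (n : ℕ) :
    Snat (n + 1) = Snat n + 2 * Unat n + ((2 * n + 2).choose (n + 1)) ^ 2 := by
  unfold Snat Unat
  rw [Finset.sum_range_succ]
  have hrow : ∀ i ∈ Finset.range (n+1),
      (∑ j ∈ Finset.range (n + 1 + 1), Nat.choose (i + j) i * Nat.choose (i + j) j)
      = (∑ j ∈ Finset.range (n + 1), Nat.choose (i + j) i * Nat.choose (i + j) j)
        + ((n + 1 + i).choose i)^2 := by
    intro i _
    rw [Finset.sum_range_succ]
    congr 1
    rw [sym i (n+1)]
    have : i + (n+1) = n + 1 + i := by omega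
    rw [this]; ring
  rw [Finset.sum_congr rfl hrow, Finset.sum_add_distrib]
  have hlast : (∑ j ∈ Finset.range (n + 1 + 1),
      Nat.choose (n + 1 + j) (n+1) * Nat.choose (n + 1 + j) j)
      = (∑ j ∈ Finset.range (n + 1), ((n + 1 + j).choose j)^2)
        + ((2 * n + 2).choose (n + 1)) ^ 2 := by
    rw [Finset.sum_range_succ]
    congr 1
    · apply Finset.sum_congr rfl
      intro j _
      rw [show n + 1 + j = j + (n+1) by omega, sym j (n+1),
        show j + (n+1) = n + 1 + j by omega]
      ring
    · rw [show n + 1 + (n + 1) = 2*n+2 by omega]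
      ring
  rw [hlast]
  ring

lemma double_step (n j : ℕ) (h : j + 1 ≤ n) :
    2 * (n + 1 + j).choose j ≤ (n + 2 + j).choose (j + 1) := by
  have hp : (n + 2 + j).choose (j+1) = (n+1+j).choose j + (n+1+j).choose (j+1) := by
    rw [show n + 2 + j = (n + 1 + j) + 1 by omega, Nat.choose_succ_succ']
  have hm : (n+1+j).choose j ≤ (n+1+j).choose (j+1) :=
    Nat.choose_le_succ_of_lt_half_left (by omega)
  omega

lemma geom_sq (g : ℕ → ℕ) : ∀ n : ℕ, (∀ j < n, 4 * g j ≤ g (j + 1)) →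
    3 * (∑ j ∈ Finset.range (n + 1), g j) ≤ 4 * g n := by
  intro n
  induction n with
  | zero => intro _; simp; omega
  | succ m ih =>
    intro h
    rw [Finset.sum_range_succ]
    have h1 := ih (fun j hj => h j (by omega))
    have h2 := h m (by omega)
    omega

lemma Ubound_aux (n : ℕ) (hn : 1 ≤ n) :
    3 * (∑ j ∈ Finset.range (n + 1), ((n + 1 + j).choose j) ^ 2) ≤
      3 * ((2*n+1).choose n)^2 + 4 * ((2*n).choose (n-1))^2 := by
  set g : ℕ → ℕ := fun j => ((n + 1 + j).choose j) ^ 2 with hg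
  have hstep : ∀ j < n, 4 * g j ≤ g (j + 1) := by
    intro j hj
    have := double_step n j (by omega)
    calc 4 * g j = (2 * (n+1+j).choose j)^2 := by simp [hg]; ring
    _ ≤ ((n+2+j).choose (j+1))^2 := Nat.pow_le_pow_left this 2
    _ = g (j+1) := by rw [hg]; congr 2; omega
  obtain ⟨p, rfl⟩ : ∃ p, n = p + 1 := ⟨n - 1, by omega⟩
  rw [Finset.sum_range_succ, Nat.mul_add]
  have h1 := geom_sq g (p) (fun j hj => hstep j (by omega))
  have h4 : 4 * g p ≤ 4 * (((2*(p+1)).choose ((p+1)-1))^2) := by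
    apply Nat.mul_le_mul_left
    apply Nat.le_of_eq
    simp only [hg]; congr 2 <;> omega
  have h3 : 3 * g (p+1) = 3 * ((2*(p+1)+1).choose (p+1))^2 := by
    simp only [hg]; congr 3; omega
  have e1 : (∑ x ∈ Finset.range (p + 1), (p + 1 + 1 + x).choose x ^ 2)
      = ∑ j ∈ Finset.range (p + 1), g j := rfl
  have e2 : (p + 1 + 1 + (p + 1)).choose (p + 1) ^ 2 = g (p+1) := rfl
  omega

lemma relT (n : ℕ) : (2*n+1) * (2*n).choose n = (n+1) * (2*n+1).choose n := by
  have h1 := Nat.add_one_mul_choose_eq (2*n) n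
  have h2 : (2*n+1).choose (n+1) = (2*n+1).choose n := Nat.choose_symm_half n
  rw [h2] at h1
  ring_nf at h1 ⊢
  omega

lemma relP (n : ℕ) (h : 1 ≤ n) : (n+1) * (2*n).choose (n-1) = n * (2*n).choose n := by
  have h1 := Nat.choose_succ_right_eq (2*n) (n-1)
  rw [show n - 1 + 1 = n by omega] at h1
  rw [show 2*n - (n-1) = n + 1 by omega] at h1
  ring_nf at h1 ⊢
  omega

lemma relB (n : ℕ) : (2*n+2).choose (n+1) = 2 * (2*n+1).choose n := by
  have h2 : (2*n+1).choose (n+1) = (2*n+1).choose n := Nat.choose_symm_half n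
  have hp : (2*n+2).choose (n+1) = (2*n+1).choose n + (2*n+1).choose (n+1) := by
    rw [show 2*n+2 = (2*n+1) + 1 by omega, Nat.choose_succ_succ']
  omega


lemma Ubound (n : ℕ) (hn : 1 ≤ n) :
    18 * Unat n + 16 * ((2*n).choose n)^2 ≤ 7 * ((2*n+2).choose (n+1))^2 := by
  rw [relB]
  set A := (2*n).choose n
  set T := (2*n+1).choose n
  set P := (2*n).choose (n-1)
  have hU : 3 * Unat n ≤ 3 * ((2*n+1).choose n)^2 + 4 * ((2*n).choose (n-1))^2 := Ubound_aux n hn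
  have hT2 : (n+1)^2 * T^2 = (2*n+1)^2 * A^2 := by
    have h := relT n
    calc (n+1)^2 * T^2 = ((n+1) * T)^2 := by ring
    _ = ((2*n+1) * A)^2 := by rw [← h]
    _ = (2*n+1)^2 * A^2 := by ring
  have hP2 : (n+1)^2 * P^2 = n^2 * A^2 := by
    have h := relP n hn
    calc (n+1)^2 * P^2 = ((n+1) * P)^2 := by ring
    _ = (n * A)^2 := by rw [h]
    _ = n^2 * A^2 := by ring
  have key : (n+1)^2 * (18 * Unat n + 16 * A^2) ≤ (n+1)^2 * (7 * (2*T)^2) := by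
    have hU2 : (n+1)^2 * (3 * Unat n) ≤ (n+1)^2 * (3 * T^2 + 4 * P^2) :=
      Nat.mul_le_mul_left _ hU
    nlinarith [hU2, hT2, hP2, hn]
  exact Nat.le_of_mul_le_mul_left key (by positivity)



lemma keyNat : ∀ n, 9 * Snat n + 1 ≤ 16 * ((2*n).choose n)^2 := by
  intro n
  induction n with
  | zero => decide
  | succ m ih =>
    rcases Nat.eq_zero_or_pos m with rfl | hm
    · have h1 : Snat 1 = 7 := by decide
      rw [h1]; decide
    · have hd := Sdec m
      have hu := Ubound m hm
      rw [show 2*(m+1) = 2*m+2 by ring]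
      omega



lemma strictR (n : ℕ) :
    (Snat n : ℝ) / ((2*n).choose n : ℝ)^2 < 16/9 := by
  have hA : 0 < ((2*n).choose n : ℝ) := by
    exact_mod_cast Nat.choose_pos (by omega : n ≤ 2*n)
  rw [div_lt_div_iff₀ (by positivity) (by norm_num)]
  have h := keyNat n
  have : (9 * Snat n + 1 : ℝ) ≤ 16 * ((2*n).choose n : ℝ)^2 := by exact_mod_cast h
  nlinarith [this]

-- ℕ identities for ratio steps
lemma nat_id_t (a b : ℕ) (hb : 1 ≤ b) :
    (a + b) * ((a + (b - 1)).choose a) = b * ((a + b).choose a) := by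
  obtain ⟨c, rfl⟩ : ∃ c, b = c + 1 := ⟨b - 1, by omega⟩
  have h1 := Nat.add_one_mul_choose_eq (a + c) a
  have h2 := Nat.choose_succ_right_eq (a + c + 1) a
  rw [show a + c + 1 - a = c + 1 by omega] at h2
  rw [show a + (c + 1 - 1) = a + c by omega]
  rw [show a + (c+1) = a + c + 1 by omega]
  ring_nf at h1 h2 ⊢
  omega
lemma nat_id_s (a b : ℕ) (ha : 1 ≤ a) :
    (a + b) * ((a - 1 + b).choose (a - 1)) = a * ((a + b).choose a) := by
  obtain ⟨c, rfl⟩ : ∃ c, a = c + 1 := ⟨a - 1, by omega⟩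
  have h1 := Nat.add_one_mul_choose_eq (c + b) c
  rw [show c + 1 - 1 = c by omega, show c + 1 + b = c + b + 1 by omega]
  ring_nf at h1 ⊢
  omega

-- limit of ((n:ℝ) - c₁) / (2*n - c₂) → 1/2
lemma half_lim (c₁ c₂ : ℝ) :
    Tendsto (fun n : ℕ => ((n : ℝ) - c₁) / (2 * n - c₂)) atTop (𝓝 (1/2)) := by
  have h1 : Tendsto (fun n : ℕ => (1 : ℝ) - c₁ / n) atTop (𝓝 (1 - 0)) :=
    tendsto_const_nhds.sub (tendsto_const_div_atTop_nhds_zero_nat c₁)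
  have h2 : Tendsto (fun n : ℕ => (2 : ℝ) - c₂ / n) atTop (𝓝 (2 - 0)) :=
    tendsto_const_nhds.sub (tendsto_const_div_atTop_nhds_zero_nat c₂)
  have h3 : Tendsto (fun n : ℕ => ((1 : ℝ) - c₁ / n) / ((2 : ℝ) - c₂ / n))
      atTop (𝓝 ((1 - 0) / (2 - 0))) := h1.div h2 (by norm_num)
  have h4 : ((1:ℝ) - 0) / (2 - 0) = 1/2 := by norm_num
  rw [h4] at h3
  apply h3.congr'
  filter_upwards [eventually_gt_atTop (max 1 (Nat.ceil (max c₂ 0)))] with n hn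
  have hn1 : (1:ℝ) ≤ (n:ℝ) := by
    have : 1 < n := lt_of_le_of_lt (le_max_left _ _) hn
    exact_mod_cast this.le
  have hn0 : (n:ℝ) ≠ 0 := by linarith
  have hc2 : c₂ < (n:ℝ) := by
    have h5 : (Nat.ceil (max c₂ 0) : ℝ) < n := by
      exact_mod_cast lt_of_le_of_lt (le_max_right _ _) hn
    have := Nat.le_ceil (max c₂ 0)
    have := le_max_left c₂ (0:ℝ)
    linarith
  have hden : 2 * (n:ℝ) - c₂ ≠ 0 := by nlinarith
  field_simp


noncomputable def rat (s t n : ℕ) : ℝ :=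
  (((n - s) + (n - t)).choose (n - s) : ℝ) / ((2 * n).choose n : ℝ)

lemma choose_2n_pos (n : ℕ) : (0:ℝ) < ((2*n).choose n : ℝ) := by
  exact_mod_cast Nat.choose_pos (by omega : n ≤ 2*n)

lemma rat_step_t (s t : ℕ) (n : ℕ) (hn : s + t + 1 ≤ n) :
    rat s (t + 1) n = rat s t n * (((n:ℝ) - t) / (2 * n - (s + t))) := by
  have ha : 1 ≤ n - t := by omega
  have key := nat_id_t (n - s) (n - t) ha
  unfold rat
  rw [show n - (t+1) = (n - t) - 1 by omega]
  have hab : ((n - s : ℕ) : ℝ) + ((n - t : ℕ) : ℝ) = 2 * n - (s + t) := by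
    push_cast [Nat.cast_sub (by omega : s ≤ n), Nat.cast_sub (by omega : t ≤ n)]
    ring
  have hb : ((n - t : ℕ) : ℝ) = (n:ℝ) - t := by
    push_cast [Nat.cast_sub (by omega : t ≤ n)]; ring
  have hden : (0:ℝ) < 2 * (n:ℝ) - (s + t) := by
    have : (s:ℝ) + t + 1 ≤ n := by exact_mod_cast hn
    linarith
  have keyR : ((n - s + (n - t) : ℕ) : ℝ) * ((n - s + (n - t - 1)).choose (n - s) : ℝ)
      = ((n - t : ℕ) : ℝ) * ((n - s + (n - t)).choose (n - s) : ℝ) := by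
    exact_mod_cast key
  have hab2 : ((n - s + (n - t) : ℕ) : ℝ) = 2 * n - (s + t) := by
    push_cast [Nat.cast_sub (by omega : s ≤ n), Nat.cast_sub (by omega : t ≤ n)]
    ring
  rw [hab2, hb] at keyR
  have hA := choose_2n_pos n
  field_simp
  rw [eq_div_iff (by linarith)]
  nlinarith [keyR, hA]

lemma rat_step_s (s t : ℕ) (n : ℕ) (hn : s + t + 1 ≤ n) :
    rat (s + 1) t n = rat s t n * (((n:ℝ) - s) / (2 * n - (s + t))) := by
  have ha : 1 ≤ n - s := by omega
  have key := nat_id_s (n - s) (n - t) ha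
  unfold rat
  rw [show n - (s+1) = (n - s) - 1 by omega]
  have hb : ((n - s : ℕ) : ℝ) = (n:ℝ) - s := by
    push_cast [Nat.cast_sub (by omega : s ≤ n)]; ring
  have hden : (0:ℝ) < 2 * (n:ℝ) - (s + t) := by
    have : (s:ℝ) + t + 1 ≤ n := by exact_mod_cast hn
    linarith
  have keyR : ((n - s + (n - t) : ℕ) : ℝ) * ((n - s - 1 + (n - t)).choose (n - s - 1) : ℝ)
      = ((n - s : ℕ) : ℝ) * ((n - s + (n - t)).choose (n - s) : ℝ) := by
    exact_mod_cast key
  have hab2 : ((n - s + (n - t) : ℕ) : ℝ) = 2 * n - (s + t) := by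
    push_cast [Nat.cast_sub (by omega : s ≤ n), Nat.cast_sub (by omega : t ≤ n)]
    ring
  rw [hab2, hb] at keyR
  have hA := choose_2n_pos n
  field_simp
  rw [eq_div_iff (by linarith)]
  nlinarith [keyR, hA]

lemma tendsto_rat (s t : ℕ) :
    Tendsto (rat s t) atTop (𝓝 ((1/2 : ℝ)^(s + t))) := by
  have hstep_t : ∀ s t : ℕ, Tendsto (rat s t) atTop (𝓝 ((1/2 : ℝ)^(s + t))) →
      Tendsto (rat s (t+1)) atTop (𝓝 ((1/2 : ℝ)^(s + (t+1)))) := by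
    intro s t ih
    have h2 := half_lim (t : ℝ) ((s : ℝ) + t)
    have h3 := ih.mul h2
    rw [show (1/2:ℝ)^(s+t) * (1/2) = (1/2:ℝ)^(s+(t+1)) by ring] at h3
    apply h3.congr'
    filter_upwards [eventually_ge_atTop (s + t + 1)] with n hn
    rw [rat_step_t s t n hn]
  have hstep_s : ∀ s t : ℕ, Tendsto (rat s t) atTop (𝓝 ((1/2 : ℝ)^(s + t))) →
      Tendsto (rat (s+1) t) atTop (𝓝 ((1/2 : ℝ)^((s+1) + t))) := by
    intro s t ih
    have h2 := half_lim (s : ℝ) ((s : ℝ) + t)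
    have h3 := ih.mul h2
    rw [show (1/2:ℝ)^(s+t) * (1/2) = (1/2:ℝ)^((s+1)+t) by ring] at h3
    apply h3.congr'
    filter_upwards [eventually_ge_atTop (s + t + 1)] with n hn
    rw [rat_step_s s t n hn]
  induction t with
  | zero =>
    induction s with
    | zero =>
      have : rat 0 0 = fun _ : ℕ => (1:ℝ) := by
        funext n
        unfold rat
        rw [Nat.sub_zero, show n + n = 2 * n by ring]
        exact div_self (ne_of_gt (choose_2n_pos n))
      rw [this]
      simp only [Nat.add_zero, pow_zero]
      exact tendsto_const_nhds
    | succ s ihs => exact hstep_s s 0 ihs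
  | succ t iht => exact hstep_t s t iht




noncomputable def q (i j : ℕ) : ℝ := ((i+j).choose i : ℝ) * ((i+j).choose j : ℝ)

lemma q_nonneg (i j : ℕ) : 0 ≤ q i j := by unfold q; positivity

lemma subsum (h : ℕ → ℝ) (hpos : ∀ i, 0 ≤ h i) (m n : ℕ) (hmn : m ≤ n) :
    ∑ s ∈ Finset.range (m+1), h (n - s) ≤ ∑ i ∈ Finset.range (n+1), h i := by
  have himg : ∑ s ∈ Finset.range (m+1), h (n - s)
      = ∑ i ∈ (Finset.range (m+1)).image (fun s => n - s), h i := by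
    rw [Finset.sum_image]
    intro x hx y hy hxy
    simp only [Finset.mem_coe, Finset.mem_range] at hx hy hxy
    omega
  rw [himg]
  apply Finset.sum_le_sum_of_subset_of_nonneg
  · intro i hi
    simp only [Finset.mem_image, Finset.mem_range] at hi ⊢
    omega
  · intro i _ _
    exact hpos i

lemma box_le (m n : ℕ) (hmn : m ≤ n) :
    ∑ s ∈ Finset.range (m+1), ∑ t ∈ Finset.range (m+1), (rat s t n)^2
      ≤ (Snat n : ℝ) / ((2*n).choose n : ℝ)^2 := by
  have hA := choose_2n_pos n
  have hterm : ∀ s t : ℕ, rat s t n ^ 2 = q (n - s) (n - t) / ((2*n).choose n : ℝ)^2 := by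
    intro s t
    unfold rat q
    rw [div_pow, sym (n-s) (n-t)]
    ring
  have hbox : ∑ s ∈ Finset.range (m+1), ∑ t ∈ Finset.range (m+1), (rat s t n)^2
      = (∑ s ∈ Finset.range (m+1), ∑ t ∈ Finset.range (m+1), q (n-s) (n-t))
        / ((2*n).choose n : ℝ)^2 := by
    rw [Finset.sum_div]
    apply Finset.sum_congr rfl
    intro s _
    rw [Finset.sum_div]
    apply Finset.sum_congr rfl
    intro t _
    exact hterm s t
  rw [hbox]
  have hS : (Snat n : ℝ) = ∑ i ∈ Finset.range (n+1), ∑ j ∈ Finset.range (n+1), q i j := by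
    unfold Snat q
    push_cast
    rfl
  rw [hS]
  gcongr
  calc ∑ s ∈ Finset.range (m+1), ∑ t ∈ Finset.range (m+1), q (n-s) (n-t)
      ≤ ∑ s ∈ Finset.range (m+1), ∑ j ∈ Finset.range (n+1), q (n-s) j := by
        apply Finset.sum_le_sum
        intro s _
        exact subsum (q (n-s)) (q_nonneg (n-s)) m n hmn
    _ ≤ ∑ i ∈ Finset.range (n+1), ∑ j ∈ Finset.range (n+1), q i j := by
        exact subsum (fun i => ∑ j ∈ Finset.range (n+1), q i j)
          (fun i => Finset.sum_nonneg (fun j _ => q_nonneg i j)) m n hmn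



lemma Lsum_eq (m : ℕ) :
    ∑ s ∈ Finset.range (m+1), ∑ t ∈ Finset.range (m+1), ((1/2:ℝ)^(s+t))^2
      = (∑ s ∈ Finset.range (m+1), (1/4:ℝ)^s)^2 := by
  rw [sq (∑ s ∈ Finset.range (m+1), (1/4:ℝ)^s), Finset.sum_mul_sum]
  apply Finset.sum_congr rfl
  intro s _
  apply Finset.sum_congr rfl
  intro t _
  rw [← pow_add]
  rw [show ((1:ℝ)/4) = (1/2)^2 by norm_num, ← pow_mul]
  rw [← pow_mul]
  ring_nf

lemma geom_lb (c : ℝ) (hc : c < 16/9) :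
    ∃ m : ℕ, c < (∑ s ∈ Finset.range (m+1), (1/4:ℝ)^s)^2 := by
  obtain ⟨k, hk⟩ := exists_pow_lt_of_lt_one
    (show (0:ℝ) < (16/9 - c)/4 by linarith) (show (1/4:ℝ) < 1 by norm_num)
  refine ⟨k, ?_⟩
  have hx : (0:ℝ) < (1/4:ℝ)^(k+1) := by positivity
  have hx2 : ((1/4:ℝ))^(k+1) ≤ (1/4:ℝ)^k := by
    apply pow_le_pow_of_le_one (by norm_num) (by norm_num)
    omega
  have hG : ∑ s ∈ Finset.range (k+1), (1/4:ℝ)^s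
      = ((1/4:ℝ)^(k+1) - 1)/((1/4:ℝ) - 1) := geom_sum_eq (by norm_num) (k+1)
  rw [hG]
  set x := (1/4:ℝ)^(k+1) with hxdef
  have h1 : ((x - 1)/((1/4:ℝ) - 1)) = (4/3) * (1 - x) := by ring
  rw [h1]
  nlinarith [hx, hx2, hk]




lemma approx (c : ℝ) (hc : c < 16/9) :
    ∃ n : ℕ, c < (Snat n : ℝ) / ((2*n).choose n : ℝ)^2 := by
  obtain ⟨m, hm⟩ := geom_lb c hc
  have htend : Tendsto
      (fun n => ∑ s ∈ Finset.range (m+1), ∑ t ∈ Finset.range (m+1), (rat s t n)^2)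
      atTop (𝓝 (∑ s ∈ Finset.range (m+1), ∑ t ∈ Finset.range (m+1), ((1/2:ℝ)^(s+t))^2)) := by
    apply tendsto_finset_sum
    intro s _
    apply tendsto_finset_sum
    intro t _
    exact (tendsto_rat s t).pow 2
  rw [Lsum_eq m] at htend
  have hev : ∀ᶠ n in atTop,
      c < ∑ s ∈ Finset.range (m+1), ∑ t ∈ Finset.range (m+1), (rat s t n)^2 :=
    htend.eventually (eventually_gt_nhds hm)
  obtain ⟨n, hn1, hn2⟩ := (hev.and (eventually_ge_atTop m)).exists
  exact ⟨n, lt_of_lt_of_le hn1 (box_le m n hn2)⟩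

theorem k_sup_not_attained :
    (⨆ n : ℕ,
      ((∑ i ∈ Finset.range (n + 1), ∑ j ∈ Finset.range (n + 1),
          Nat.choose (i + j) i * Nat.choose (i + j) j : ℕ) : ℝ) /
        ((2 * n).choose n : ℝ) ^ 2) = 16 / 9 ∧
    ∀ n : ℕ,
      ((∑ i ∈ Finset.range (n + 1), ∑ j ∈ Finset.range (n + 1),
          Nat.choose (i + j) i * Nat.choose (i + j) j : ℕ) : ℝ) /
        ((2 * n).choose n : ℝ) ^ 2 < 16 / 9 := by
  have hstrict : ∀ n : ℕ,
      ((∑ i ∈ Finset.range (n + 1), ∑ j ∈ Finset.range (n + 1),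
          Nat.choose (i + j) i * Nat.choose (i + j) j : ℕ) : ℝ) /
        ((2 * n).choose n : ℝ) ^ 2 < 16 / 9 := fun n => strictR n
  refine ⟨?_, hstrict⟩
  have hbdd : BddAbove (Set.range (fun n : ℕ =>
      ((∑ i ∈ Finset.range (n + 1), ∑ j ∈ Finset.range (n + 1),
          Nat.choose (i + j) i * Nat.choose (i + j) j : ℕ) : ℝ) /
        ((2 * n).choose n : ℝ) ^ 2)) := by
    refine ⟨16/9, ?_⟩
    rintro _ ⟨n, rfl⟩
    exact (hstrict n).le
  apply le_antisymm
  · exact ciSup_le fun n => (hstrict n).le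
  · apply le_of_forall_lt
    intro c hc
    obtain ⟨n, hn⟩ := approx c hc
    exact lt_of_lt_of_le hn (le_ciSup hbdd n)
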